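/- Let J = diag(−1, 1) and let R ∈ M₂(ℂ) satisfy JR = R*J, RJR* ≥ J (i.e., RJR* − J is positive semidefinite), and (R − I)² = 0. Then there exists ψ ∈ ℂ such that R = [[1 − |ψ|, ψ], [−conj(ψ), 1 + |ψ|]]. -/

import Mathlib

open Matrix
open scoped ComplexOrder

/-- The structure formula (6.4) for Z-class J-modules: a 2×2 matrix `R` with
`JR = R*J`, `RJR* ≥ J` and `(R - I)² = 0`, where `J = diag(-1, 1)`, has the
form `[[1 - |ψ|, ψ], [-conj ψ, 1 + |ψ|]]` for some `ψ ∈ ℂ`. -/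
theorem stmt_6 (J R : Matrix (Fin 2) (Fin 2) ℂ)
    (hJ : J = !![(-1 : ℂ), 0; 0, 1])
    (h1 : J * R = Rᴴ * J)
    (h2 : (R * J * Rᴴ - J).PosSemidef)
    (h3 : (R - 1) ^ 2 = 0) :
    ∃ ψ : ℂ, R = !![1 - (‖ψ‖ : ℂ), ψ;
                    -(starRingEnd ℂ) ψ, 1 + (‖ψ‖ : ℂ)] := by
  subst hJ
  rw [pow_two] at h3
  have e1 := congrFun (congrFun h1 0) 0
  have e2 := congrFun (congrFun h1 1) 0
  have e3 := congrFun (congrFun h1 1) 1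
  have f1 := congrFun (congrFun h3 0) 0
  have f2 := congrFun (congrFun h3 0) 1
  have f4 := congrFun (congrFun h3 1) 1
  simp [Matrix.mul_apply, Fin.sum_univ_two, Matrix.one_apply, Matrix.sub_apply] at e1 e2 e3 f1 f2 f4
  have g := h2.dotProduct_mulVec_nonneg ![1, 0]
  simp [Matrix.mulVec, dotProduct, Fin.sum_univ_two, Matrix.mul_apply, Matrix.sub_apply] at g
  set a := R 0 0 with ha
  set b := R 0 1 with hb
  set c := R 1 0 with hc
  set d := R 1 1 with hd
  -- a, d real
  have haim : a.im = 0 := Complex.conj_eq_iff_im.mp e1.symm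
  have hdim : d.im = 0 := Complex.conj_eq_iff_im.mp e3.symm
  set α := a.re with hα
  set β := ‖b‖ with hβ
  have haR : a = (α : ℂ) := Complex.ext rfl haim
  -- (a-1)^2 = |b|^2
  have hb2 : ((α : ℂ) - 1) ^ 2 = ((β ^ 2 : ℝ) : ℂ) := by
    rw [e2] at f1
    push_cast
    rw [← haR]
    have hbb : b * (starRingEnd ℂ) b = ((‖b‖ : ℝ) : ℂ) ^ 2 := by
      rw [Complex.mul_conj]
      norm_cast
      exact (Complex.sq_norm b).symm
    linear_combination f1 + hbb
  have hb2R : (α - 1) ^ 2 = β ^ 2 := by exact_mod_cast hb2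
  -- PSD gives α ≤ 1
  have gR : 0 ≤ 1 - α ^ 2 + β ^ 2 := by
    have hg : -(a * (starRingEnd ℂ) a) + b * (starRingEnd ℂ) b + 1
        = (((1 - α ^ 2 + β ^ 2 : ℝ)) : ℂ) := by
      rw [Complex.mul_conj, Complex.mul_conj]
      have h1' : Complex.normSq a = α ^ 2 := by
        rw [Complex.normSq_apply, haim]; ring
      have h2' : Complex.normSq b = β ^ 2 := (Complex.sq_norm b).symm
      rw [h1', h2']; push_cast; ring
    rw [hg] at g
    exact_mod_cast g
  have hα1 : α ≤ 1 := by nlinarith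
  have hβval : β = 1 - α := by nlinarith [norm_nonneg b]
  have haval : a = 1 - (β : ℂ) := by rw [haR, hβval]; push_cast; ring
  -- d
  have hdval : d = 1 + (β : ℂ) := by
    by_cases hb0 : b = 0
    · have : β = 0 := by rw [hβ, hb0]; simp
      rw [this]
      have : (d - 1) * (d - 1) = 0 := by rw [hb0] at f4; simpa using f4
      have hd1 := sub_eq_zero.mp (mul_self_eq_zero.mp this)
      rw [hd1]; norm_num
    · have hsum : b * (a + d - 2) = 0 := by linear_combination f2
      have : a + d - 2 = 0 := by
        rcases mul_eq_zero.mp hsum with h | h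
        · exact absurd h hb0
        · exact h
      have hd2 : d = 2 - a := by linear_combination this
      rw [hd2, haval]; ring
  refine ⟨b, ?_⟩
  ext i j
  fin_cases i <;> fin_cases j <;>
    simp [← ha, ← hb, ← hc, ← hd, haval, hdval, e2, ← hβ]
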